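/- Let S_{≤q} = {v ∈ ℤ² : v primitive, ‖v‖ ≤ q} where ‖·‖ is the gauge of K = conv{(1,1),(-1,0),(0,-1)}. Then S_{≤q} is balanced: ∑_{v ∈ S_{≤q}} v = 0. -/

import Mathlib

noncomputable def gaugeZ (v : ℤ × ℤ) : ℝ :=
  gauge (convexHull ℝ {((1:ℝ),(1:ℝ)), (-1,0), (0,-1)}) ((v.1 : ℝ), (v.2 : ℝ))

open Pointwise

namespace Stmt11Aux

/-- The order-3 rotation. -/
def g (v : ℤ × ℤ) : ℤ × ℤ := (-v.2, v.1 - v.2)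

lemma g_three (v : ℤ × ℤ) : g (g (g v)) = v := by
  simp only [g, Prod.ext_iff]
  omega

lemma sum_orbit (v : ℤ × ℤ) : v + g v + g (g v) = 0 := by
  simp only [g, Prod.ext_iff]
  constructor <;> simp <;> ring

lemma g_inj : Function.Injective g := by
  intro a b h
  simp only [g, Prod.ext_iff] at h ⊢
  omega

noncomputable def L : (ℝ × ℝ) →ₗ[ℝ] (ℝ × ℝ) where
  toFun p := (-p.2, p.1 - p.2)
  map_add' a b := by simp [Prod.ext_iff]; constructor <;> ring
  map_smul' c a := by simp [Prod.ext_iff]; ring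

lemma L_inj : Function.Injective L := by
  intro a b h
  simp only [L, LinearMap.coe_mk, AddHom.coe_mk, Prod.ext_iff] at h ⊢
  constructor <;> linarith [h.1, h.2]

lemma L_image_K :
    L '' (convexHull ℝ {((1:ℝ),(1:ℝ)), (-1,0), (0,-1)}) =
      convexHull ℝ {((1:ℝ),(1:ℝ)), (-1,0), (0,-1)} := by
  rw [L.image_convexHull]
  congr 1
  have h1 : L ((1:ℝ),(1:ℝ)) = (-1, 0) := by simp [L]
  have h2 : L ((-1:ℝ),(0:ℝ)) = (0, -1) := by simp [L]
  have h3 : L ((0:ℝ),(-1:ℝ)) = (1, 1) := by norm_num [L]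
  rw [Set.image_insert_eq, Set.image_insert_eq, Set.image_singleton, h1, h2, h3]
  ext p
  simp only [Set.mem_insert_iff, Set.mem_singleton_iff]
  tauto

lemma gauge_L (x : ℝ × ℝ) :
    gauge (convexHull ℝ {((1:ℝ),(1:ℝ)), (-1,0), (0,-1)}) (L x) =
      gauge (convexHull ℝ {((1:ℝ),(1:ℝ)), (-1,0), (0,-1)}) x := by
  rw [gauge_def, gauge_def]
  congr 1
  ext r
  simp only [Set.mem_sep_iff]
  refine and_congr_right fun _ => ?_
  constructor
  · intro h
    rw [show r • convexHull ℝ {((1:ℝ),(1:ℝ)), (-1,0), (0,-1)}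
        = L '' (r • convexHull ℝ {((1:ℝ),(1:ℝ)), (-1,0), (0,-1)}) by
      rw [image_smul_set, L_image_K]] at h
    obtain ⟨y, hy, hxy⟩ := h
    rwa [L_inj hxy] at hy
  · intro h
    rw [show r • convexHull ℝ {((1:ℝ),(1:ℝ)), (-1,0), (0,-1)}
        = L '' (r • convexHull ℝ {((1:ℝ),(1:ℝ)), (-1,0), (0,-1)}) by
      rw [image_smul_set, L_image_K]]
    exact ⟨x, h, rfl⟩

lemma gaugeZ_g (v : ℤ × ℤ) : gaugeZ (g v) = gaugeZ v := by
  have : (((g v).1 : ℝ), ((g v).2 : ℝ)) = L ((v.1 : ℝ), (v.2 : ℝ)) := by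
    simp [g, L]
  rw [gaugeZ, this, gauge_L]
  rfl

lemma gcd_g (v : ℤ × ℤ) : Int.gcd (g v).1 (g v).2 = Int.gcd v.1 v.2 := by
  obtain ⟨x, y⟩ := v
  simp only [g]
  apply Nat.dvd_antisymm
  · have : (Int.gcd (-y) (x - y) : ℤ) ∣ (Int.gcd x y : ℤ) := by
      rw [Int.natCast_dvd_natCast]
      apply Int.dvd_gcd
      · have h1 : (Int.gcd (-y) (x - y) : ℤ) ∣ x - y := Int.gcd_dvd_right (-y) (x - y)
        have h2 : (Int.gcd (-y) (x - y) : ℤ) ∣ y :=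
          dvd_neg.mp (Int.gcd_dvd_left (-y) (x - y) : (Int.gcd (-y) (x - y) : ℤ) ∣ -y)
        simpa using dvd_add h1 h2
      · simpa using (Int.gcd_dvd_left (-y) (x - y) : (Int.gcd (-y) (x - y) : ℤ) ∣ -y)
    exact_mod_cast this
  · have : (Int.gcd x y : ℤ) ∣ (Int.gcd (-y) (x - y) : ℤ) := by
      rw [Int.natCast_dvd_natCast]
      apply Int.dvd_gcd
      · simpa using (Int.gcd_dvd_right x y : (Int.gcd x y : ℤ) ∣ y)
      · exact dvd_sub (Int.gcd_dvd_left x y) (Int.gcd_dvd_right x y)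
    exact_mod_cast this

end Stmt11Aux

open Stmt11Aux in
theorem stmt11 (q : ℕ) (S : Finset (ℤ × ℤ))
    (hS : ∀ v : ℤ × ℤ, v ∈ S ↔ (Int.gcd v.1 v.2 = 1 ∧ gaugeZ v ≤ (q : ℝ))) :
    ∑ v ∈ S, v = 0 := by
  have hmem : ∀ v, g v ∈ S ↔ v ∈ S := by
    intro v
    rw [hS, hS, gcd_g, gaugeZ_g]
  have himg : S.image g = S := by
    apply Finset.eq_of_subset_of_card_le
    · intro w hw
      obtain ⟨v, hv, rfl⟩ := Finset.mem_image.mp hw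
      exact (hmem v).mpr hv
    · rw [Finset.card_image_of_injective _ g_inj]
  have key : ∀ f : (ℤ × ℤ) → (ℤ × ℤ), ∑ v ∈ S, f (g v) = ∑ v ∈ S, f v := by
    intro f
    conv_rhs => rw [← himg]
    rw [Finset.sum_image (fun a _ b _ h => g_inj h)]
  have h1 : ∑ v ∈ S, g v = ∑ v ∈ S, v := key id
  have h2 : ∑ v ∈ S, g (g v) = ∑ v ∈ S, v := by
    rw [key g, h1]
  have h3 : (∑ v ∈ S, v) + (∑ v ∈ S, v) + (∑ v ∈ S, v) = 0 := by
    calc (∑ v ∈ S, v) + (∑ v ∈ S, v) + (∑ v ∈ S, v)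
        = ∑ v ∈ S, (v + g v + g (g v)) := by
          rw [Finset.sum_add_distrib, Finset.sum_add_distrib, h1, h2]
      _ = 0 := by simp [sum_orbit]
  have h6 : (3:ℤ) • (∑ v ∈ S, v) = 0 := by
    rw [show (3:ℤ) = 1 + 1 + 1 by norm_num, add_smul, add_smul, one_smul]
    exact h3
  exact (smul_eq_zero.mp h6).resolve_left (by norm_num)
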